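/- Let P = (S, 𝓛) be a thick nondegenerate polar space of rank at least 3 and let W be a proper subspace of P that is contained in some hyperplane of P but is not itself a hyperplane. Then the map sending each parallel class [L] of affine lines of D(P, W) to the point L^∞ is a well-defined bijection from the set of parallel classes of affine lines onto W. -/
import Mathlib


namespace PolarComp

variable {S : Type*}

/-- A partial linear space: every line has at least two points, and two
distinct lines share at most one point. -/
def IsPLS (𝓛 : Set (Set S)) : Prop :=
  (∀ l ∈ 𝓛, ∃ a b : S, a ≠ b ∧ a ∈ l ∧ b ∈ l) ∧
  (∀ l ∈ 𝓛, ∀ m ∈ 𝓛, l ≠ m → ∀ a b : S, a ∈ l ∩ m → b ∈ l ∩ m → a = b)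

/-- Thick: every line has at least three points. -/
def Thick (𝓛 : Set (Set S)) : Prop :=
  ∀ l ∈ 𝓛, ∃ a b c : S, a ≠ b ∧ a ≠ c ∧ b ≠ c ∧ a ∈ l ∧ b ∈ l ∧ c ∈ l

/-- Two points are collinear iff they lie on a common line (every point is
collinear with itself). -/
def Collin (𝓛 : Set (Set S)) (a b : S) : Prop :=
  a = b ∨ ∃ l ∈ 𝓛, a ∈ l ∧ b ∈ l

/-- Nondegenerate: no point is collinear with all other points. -/
def Nondegenerate (𝓛 : Set (Set S)) : Prop :=
  ∀ a : S, ∃ b : S, ¬ Collin 𝓛 a b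

/-- The one-or-all axiom: a point off a line is collinear with exactly one or
with all points of the line. -/
def OneOrAll (𝓛 : Set (Set S)) : Prop :=
  ∀ l ∈ 𝓛, ∀ a : S, a ∉ l →
    (∃! b, b ∈ l ∧ Collin 𝓛 a b) ∨ (∀ b ∈ l, Collin 𝓛 a b)

/-- A polar space is a partial linear space satisfying the one-or-all axiom. -/
def IsPolarSpace (𝓛 : Set (Set S)) : Prop := IsPLS 𝓛 ∧ OneOrAll 𝓛

/-- A subspace: contains every line meeting it in at least two points. -/
def IsSubspace (𝓛 : Set (Set S)) (X : Set S) : Prop :=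
  ∀ l ∈ 𝓛, (∃ a ∈ l ∩ X, ∃ b ∈ l ∩ X, a ≠ b) → l ⊆ X

/-- A hyperplane: a proper subspace meeting every line. -/
def IsHyperplane (𝓛 : Set (Set S)) (X : Set S) : Prop :=
  IsSubspace 𝓛 X ∧ X ≠ Set.univ ∧ ∀ l ∈ 𝓛, (l ∩ X).Nonempty

/-- A singular set: any two of its points are collinear. -/
def SingularSet (𝓛 : Set (Set S)) (X : Set S) : Prop :=
  ∀ a ∈ X, ∀ b ∈ X, Collin 𝓛 a b

/-- Rank at least `n`: there is a strictly increasing chain of `n` nonempty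
singular subspaces. -/
def RankAtLeast (𝓛 : Set (Set S)) (n : ℕ) : Prop :=
  ∃ X : Fin n → Set S, StrictMono X ∧
    ∀ i, (X i).Nonempty ∧ SingularSet 𝓛 (X i) ∧ IsSubspace 𝓛 (X i)

/-- `perp 𝓛 a` is the set of points collinear with `a`. -/
def perp (𝓛 : Set (Set S)) (a : S) : Set S := {b | Collin 𝓛 a b}

/-- The radical of `X`: `X ∩ X^⊥`. -/
def radSet (𝓛 : Set (Set S)) (X : Set S) : Set S :=
  X ∩ {a | ∀ b ∈ X, Collin 𝓛 a b}

/-- The lines of the complement `D(P, W)`. -/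
def compLines (𝓛 : Set (Set S)) (W : Set S) : Set (Set S) :=
  {K | ∃ k ∈ 𝓛, ¬ k ⊆ W ∧ K = k \ W}

/-- Two proper lines are parallel iff their closures meet in `W`. -/
def Parallel (𝓛 : Set (Set S)) (W : Set S) (K L : Set S) : Prop :=
  ∃ k ∈ 𝓛, ∃ l ∈ 𝓛, ¬ k ⊆ W ∧ ¬ l ⊆ W ∧ K = k \ W ∧ L = l \ W ∧
    (k ∩ l ∩ W).Nonempty

/-- A proper line is affine iff its closure meets `W`. -/
def IsAffineLine (𝓛 : Set (Set S)) (W : Set S) (K : Set S) : Prop :=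
  ∃ k ∈ 𝓛, ¬ k ⊆ W ∧ K = k \ W ∧ (k ∩ W).Nonempty

/-- `AtInfinity 𝓛 W K a` says that `a = K^∞`, i.e. `a` is a point of `K̄ ∩ W`. -/
def AtInfinity (𝓛 : Set (Set S)) (W : Set S) (K : Set S) (a : S) : Prop :=
  ∃ k ∈ 𝓛, ¬ k ⊆ W ∧ K = k \ W ∧ a ∈ k ∩ W

/-- A deep point of `W`: a point of `W` which is `L^∞` for no affine line `L`. -/
def IsDeepPoint (𝓛 : Set (Set S)) (W : Set S) (a : S) : Prop :=
  a ∈ W ∧ ∀ K : Set S, ¬ AtInfinity 𝓛 W K a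

/-- A plane: a minimal singular subspace containing a given line and a given
point not on that line. -/
def IsPlane (𝓛 : Set (Set S)) (X : Set S) : Prop :=
  ∃ l ∈ 𝓛, ∃ a : S, a ∉ l ∧ a ∈ X ∧ l ⊆ X ∧
    SingularSet 𝓛 X ∧ IsSubspace 𝓛 X ∧
    ∀ Y : Set S, SingularSet 𝓛 Y → IsSubspace 𝓛 Y → l ⊆ Y → a ∈ Y → Y ⊆ X → Y = X

/-- `Π^∞`: the points at infinity of a plane of the complement with closure `Pl`. -/
def planeInfinity (𝓛 : Set (Set S)) (W : Set S) (Pl : Set S) : Set S :=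
  {a | ∃ M : Set S, IsAffineLine 𝓛 W M ∧ M ⊆ Pl \ W ∧ AtInfinity 𝓛 W M a}

/-- A deep line: an improper line `L ⊆ W` which is `Π^∞` for no plane of the
complement. -/
def IsDeepLine (𝓛 : Set (Set S)) (W : Set S) (L : Set S) : Prop :=
  L ∈ 𝓛 ∧ L ⊆ W ∧
    ∀ Pl : Set S, IsPlane 𝓛 Pl → ¬ Pl ⊆ W → planeInfinity 𝓛 W Pl ≠ L

/-- The relation `∥*` on proper lines of the complement. -/
def ParStar (𝓛 : Set (Set S)) (W : Set S) (K₁ K₂ : Set S) : Prop :=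
  K₁ ∈ compLines 𝓛 W ∧ K₂ ∈ compLines 𝓛 W ∧ K₁ ∩ K₂ = ∅ ∧
    ∃ L₁ ∈ compLines 𝓛 W, ∃ L₂ ∈ compLines 𝓛 W, L₁ ≠ L₂ ∧
      (L₁ ∩ L₂).Nonempty ∧ (L₁ ∩ K₁).Nonempty ∧ (L₁ ∩ K₂).Nonempty ∧
      (L₂ ∩ K₁).Nonempty ∧ (L₂ ∩ K₂).Nonempty

/-- `∥ᵗ`: the transitive closure of `∥*`. -/
def ParT (𝓛 : Set (Set S)) (W : Set S) : Set S → Set S → Prop :=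
  Relation.TransGen (ParStar 𝓛 W)

/-- The anti-euclidean relation `~` on affine lines: `K₁ ~ K₂` iff no affine
line through a point of `K₁` is parallel to `K₂`. -/
def Tilde (𝓛 : Set (Set S)) (W : Set S) (K₁ K₂ : Set S) : Prop :=
  ∀ a ∈ K₁, ∀ M : Set S, IsAffineLine 𝓛 W M → a ∈ M → ¬ Parallel 𝓛 W M K₂

/-- `[K₁] ≡ [K₂]`: `M ~ N` and `N ~ M` for all `M ∥ K₁` and `N ∥ K₂`. -/
def EquivCls (𝓛 : Set (Set S)) (W : Set S) (K₁ K₂ : Set S) : Prop :=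
  ∀ M N : Set S, IsAffineLine 𝓛 W M → IsAffineLine 𝓛 W N →
    Parallel 𝓛 W M K₁ → Parallel 𝓛 W N K₂ → Tilde 𝓛 W M N ∧ Tilde 𝓛 W N M

/-- The parallel class of an affine line. -/
def parClass (𝓛 : Set (Set S)) (W : Set S) (L : Set S) : Set (Set S) :=
  {M | IsAffineLine 𝓛 W M ∧ Parallel 𝓛 W M L}

/-- The class of affine lines with point at infinity `w`. -/
def classAt (𝓛 : Set (Set S)) (W : Set S) (w : S) : Set (Set S) :=
  {L | IsAffineLine 𝓛 W L ∧ AtInfinity 𝓛 W L w}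

/-- A witness that the polar space embeds in a projective space `ℙ(F, V)`. -/
structure EmbeddingWitness (𝓛 : Set (Set S)) where
  F : Type
  [iF : DivisionRing F]
  V : Type
  [iV : AddCommGroup V]
  [iM : Module F V]
  f : S → Projectivization F V
  inj : Function.Injective f
  spanning : ∀ T : Submodule F V, (∀ s : S, Projectivization.submodule (f s) ≤ T) → T = ⊤
  lines2dim : ∀ l ∈ 𝓛, ∃ U : Submodule F V, Module.finrank F ↥U = 2 ∧
    f '' l = {p | ∃ v : V, ∃ hv : v ≠ 0, v ∈ U ∧ p = Projectivization.mk F v hv}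

/-- An embeddable polar space. -/
def Embeddable (𝓛 : Set (Set S)) : Prop := Nonempty (EmbeddingWitness 𝓛)


theorem statement_15 (𝓛 : Set (Set S)) (hpolar : IsPolarSpace 𝓛) (hthick : Thick 𝓛)
    (hnd : Nondegenerate 𝓛) (hrank : RankAtLeast 𝓛 3)
    (W : Set S) (hsub : IsSubspace 𝓛 W) (hproper : W ≠ Set.univ)
    (hhyp : ∃ H : Set S, IsHyperplane 𝓛 H ∧ W ⊆ H)
    (hnothyp : ¬ IsHyperplane 𝓛 W) :
    (∀ K : Set S, IsAffineLine 𝓛 W K → ∃! a : S, AtInfinity 𝓛 W K a) ∧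
    (∀ K L : Set S, IsAffineLine 𝓛 W K → IsAffineLine 𝓛 W L →
      ∀ a b : S, AtInfinity 𝓛 W K a → AtInfinity 𝓛 W L b →
        (Parallel 𝓛 W K L ↔ a = b)) ∧
    (∀ w ∈ W, ∃ K : Set S, IsAffineLine 𝓛 W K ∧ AtInfinity 𝓛 W K w) := by
  obtain ⟨⟨hge2, hpls⟩, hooa⟩ := hpolar
  -- a line not contained in W meets W in at most one point
  have hW1 : ∀ k ∈ 𝓛, ¬ k ⊆ W → ∀ a ∈ k ∩ W, ∀ b ∈ k ∩ W, a = b := by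
    intro k hk hks a ha b hb
    by_contra hne
    exact hks (hsub k hk ⟨a, ha, b, hb, hne⟩)
  -- a line not contained in W has two distinct points outside W
  have hW2 : ∀ k ∈ 𝓛, ¬ k ⊆ W → ∃ x y : S, x ≠ y ∧ x ∈ k \ W ∧ y ∈ k \ W := by
    intro k hk hks
    obtain ⟨a, b, c, hab, hac, hbc, ha, hb, hc⟩ := hthick k hk
    by_cases haW : a ∈ W
    · have hbW : b ∉ W := fun h => hab (hW1 k hk hks a ⟨ha, haW⟩ b ⟨hb, h⟩)
      have hcW : c ∉ W := fun h => hac (hW1 k hk hks a ⟨ha, haW⟩ c ⟨hc, h⟩)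
      exact ⟨b, c, hbc, ⟨hb, hbW⟩, ⟨hc, hcW⟩⟩
    · by_cases hbW : b ∈ W
      · have hcW : c ∉ W := fun h => hbc (hW1 k hk hks b ⟨hb, hbW⟩ c ⟨hc, h⟩)
        exact ⟨a, c, hac, ⟨ha, haW⟩, ⟨hc, hcW⟩⟩
      · exact ⟨a, b, hab, ⟨ha, haW⟩, ⟨hb, hbW⟩⟩
  -- the closure of a proper line is unique
  have hW3 : ∀ k ∈ 𝓛, ¬ k ⊆ W → ∀ k' ∈ 𝓛, k \ W = k' \ W → k = k' := by
    intro k hk hks k' hk' heq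
    by_contra hne
    obtain ⟨x, y, hxy, hx, hy⟩ := hW2 k hk hks
    have hx' : x ∈ k' \ W := heq ▸ hx
    have hy' : y ∈ k' \ W := heq ▸ hy
    exact hxy (hpls k hk k' hk' hne x y ⟨hx.1, hx'.1⟩ ⟨hy.1, hy'.1⟩)
  refine ⟨?_, ?_, ?_⟩
  · -- Part 1: unique point at infinity
    rintro K ⟨k, hk, hks, hKeq, a, haW⟩
    refine ⟨a, ⟨k, hk, hks, hKeq, haW⟩, ?_⟩
    rintro b ⟨k', hk', hks', hKeq', hbW⟩
    have heq : k = k' := hW3 k hk hks k' hk' (hKeq ▸ hKeq' ▸ rfl)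
    subst heq
    exact hW1 k hk hks b hbW a haW
  · -- Part 2: parallel iff same point at infinity
    rintro K L hK hL a b ⟨k, hk, hks, hKe, haw⟩ ⟨l, hl, hls, hLe, hbw⟩
    constructor
    · rintro ⟨k', hk', l', hl', hks', hls', hKe', hLe', c, hc⟩
      have hkk : k = k' := hW3 k hk hks k' hk' (hKe ▸ hKe' ▸ rfl)
      have hll : l = l' := hW3 l hl hls l' hl' (hLe ▸ hLe' ▸ rfl)
      subst hkk; subst hll
      have hca : c = a := hW1 k hk hks c ⟨hc.1.1, hc.2⟩ a haw
      have hcb : c = b := hW1 l hl hls c ⟨hc.1.2, hc.2⟩ b hbw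
      exact hca ▸ hcb
    · intro hab
      subst hab
      exact ⟨k, hk, l, hl, hks, hls, hKe, hLe, a, ⟨haw.1, hbw.1⟩, haw.2⟩
  · -- Part 3: surjectivity onto W
    have hexl : ∃ l ∈ 𝓛, l ∩ W = ∅ := by
      by_contra h
      push_neg at h
      exact hnothyp ⟨hsub, hproper, fun l hl =>
        h l hl⟩
    obtain ⟨l, hl, hlW⟩ := hexl
    intro w hw
    have hwl : w ∉ l := fun h => (Set.eq_empty_iff_forall_notMem.mp hlW w) ⟨h, hw⟩
    have hcol : ∃ b ∈ l, Collin 𝓛 w b := by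
      rcases hooa l hl w hwl with ⟨b, ⟨hbl, hcb⟩, _⟩ | hall
      · exact ⟨b, hbl, hcb⟩
      · obtain ⟨x, y, hxy, hx, hy⟩ := hge2 l hl
        exact ⟨x, hx, hall x hx⟩
    obtain ⟨b, hbl, hcb⟩ := hcol
    have hbW : b ∉ W := fun h => (Set.eq_empty_iff_forall_notMem.mp hlW b) ⟨hbl, h⟩
    rcases hcb with heq | ⟨k, hk, hwk, hbk⟩
    · exact absurd (heq ▸ hw) hbW
    · have hks : ¬ k ⊆ W := fun h => hbW (h hbk)
      exact ⟨k \ W, ⟨k, hk, hks, rfl, ⟨w, hwk, hw⟩⟩, ⟨k, hk, hks, rfl, hwk, hw⟩⟩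

end PolarComp
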